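/- arXiv:1801.00542 — 3 statements merged into one kernel-verified Lean document; each statement's English description precedes it below -/
import Mathlib

section
/- Let W_1,…,W_n be independent {0,1}-valued random variables and f: {0,1}^n → ℝ. For any q ≥ 1, the L^q norm of f(W) − E f(W) is at most sqrt(πq/2)·‖Δf‖₂, where ‖Δf‖₂² = Σ_{i=1}^n ‖Δ_i f‖_∞². -/
open MeasureTheory ProbabilityTheory
open scoped ENNReal NNReal

namespace McdAux

open Real Finset

variable {n : ℕ}

noncomputable def Ew (n : ℕ) (w : Fin n → Bool → ℝ) (g : (Fin n → Bool) → ℝ) : ℝ :=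
  ∑ x : Fin n → Bool, (∏ i, w i (x i)) * g x

lemma Ew_cons (w : Fin (n+1) → Bool → ℝ) (g : (Fin (n+1) → Bool) → ℝ) :
    Ew (n+1) w g = ∑ b : Bool, w 0 b *
      Ew n (fun i => w i.succ) (fun y => g (Fin.cons b y)) := by
  rw [Ew, ← (Fin.consEquiv (fun _ : Fin (n+1) => Bool)).sum_comp, Fintype.sum_prod_type]
  refine Finset.sum_congr rfl fun b _ => ?_
  rw [Ew, Finset.mul_sum]
  refine Finset.sum_congr rfl fun y _ => ?_
  simp [Fin.consEquiv, Fin.prod_univ_succ, mul_assoc]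

lemma Ew_const (w : Fin n → Bool → ℝ) (hw1 : ∀ i, w i false + w i true = 1) (c : ℝ) :
    Ew n w (fun _ => c) = c := by
  induction n with
  | zero => simp [Ew]
  | succ n ih =>
    rw [Ew_cons]
    simp only [ih (fun i => w i.succ) (fun i => hw1 i.succ)]
    simp only [Fintype.sum_bool]
    linear_combination c * hw1 0

lemma Ew_mono {w : Fin n → Bool → ℝ} (hw0 : ∀ i b, 0 ≤ w i b)
    {g h : (Fin n → Bool) → ℝ} (hgh : ∀ x, g x ≤ h x) : Ew n w g ≤ Ew n w h :=
  Finset.sum_le_sum fun x _ => mul_le_mul_of_nonneg_left (hgh x)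
    (Finset.prod_nonneg fun i _ => hw0 i (x i))

lemma Ew_nonneg {w : Fin n → Bool → ℝ} (hw0 : ∀ i b, 0 ≤ w i b)
    {g : (Fin n → Bool) → ℝ} (hg : ∀ x, 0 ≤ g x) : 0 ≤ Ew n w g :=
  Finset.sum_nonneg fun x _ => mul_nonneg
    (Finset.prod_nonneg fun i _ => hw0 i (x i)) (hg x)

lemma Ew_sub (w : Fin n → Bool → ℝ) (g h : (Fin n → Bool) → ℝ) :
    Ew n w (fun x => g x - h x) = Ew n w g - Ew n w h := by
  simp [Ew, mul_sub, Finset.sum_sub_distrib]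

lemma Ew_add (w : Fin n → Bool → ℝ) (g h : (Fin n → Bool) → ℝ) :
    Ew n w (fun x => g x + h x) = Ew n w g + Ew n w h := by
  simp [Ew, mul_add, Finset.sum_add_distrib]

lemma Ew_const_mul (w : Fin n → Bool → ℝ) (c : ℝ) (g : (Fin n → Bool) → ℝ) :
    Ew n w (fun x => c * g x) = c * Ew n w g := by
  simp [Ew, Finset.mul_sum]; congr 1; ext x; ring

lemma abs_Ew_le {w : Fin n → Bool → ℝ} (hw0 : ∀ i b, 0 ≤ w i b)
    (hw1 : ∀ i, w i false + w i true = 1) {g : (Fin n → Bool) → ℝ} {C : ℝ}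
    (h : ∀ x, |g x| ≤ C) : |Ew n w g| ≤ C := by
  rw [abs_le]
  constructor
  · have := Ew_mono hw0 (g := fun _ => -C) (h := g) (fun x => (abs_le.1 (h x)).1)
    rwa [Ew_const w hw1] at this
  · have := Ew_mono hw0 (g := g) (h := fun _ => C) (fun x => (abs_le.1 (h x)).2)
    rwa [Ew_const w hw1] at this


lemma exp_le_interp {c x : ℝ} (hc : 0 < c) (hx : |x| ≤ c) :
    Real.exp x ≤ Real.cosh c + (x / c) * Real.sinh c := by
  obtain ⟨h1, h2⟩ := abs_le.1 hx
  have ha : (0:ℝ) ≤ (c + x) / (2 * c) := div_nonneg (by linarith) (by linarith)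
  have hb : (0:ℝ) ≤ (c - x) / (2 * c) := div_nonneg (by linarith) (by linarith)
  have hab : (c + x) / (2 * c) + (c - x) / (2 * c) = 1 := by
    field_simp
    ring
  have h := convexOn_exp.2 (Set.mem_univ c) (Set.mem_univ (-c)) ha hb hab
  have heq : ((c + x) / (2 * c)) • c + ((c - x) / (2 * c)) • (-c) = x := by
    simp only [smul_eq_mul]
    field_simp
    ring
  rw [heq] at h
  refine h.trans (le_of_eq ?_)
  simp only [smul_eq_mul, Real.cosh_eq, Real.sinh_eq]
  field_simp
  ring

lemma two_point {p q u v c : ℝ} (hp : 0 ≤ p) (hq : 0 ≤ q) (hpq : p + q = 1)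
    (hm : p * u + q * v = 0) (hu : |u| ≤ c) (hv : |v| ≤ c) :
    p * Real.exp u + q * Real.exp v ≤ Real.exp (c ^ 2 / 2) := by
  have hc0 : 0 ≤ c := (abs_nonneg u).trans hu
  rcases eq_or_lt_of_le hc0 with hc | hc
  · have hu0 : u = 0 := abs_nonpos_iff.1 (hc ▸ hu)
    have hv0 : v = 0 := abs_nonpos_iff.1 (hc ▸ hv)
    rw [hu0, hv0]
    simp only [Real.exp_zero, mul_one]
    rw [hpq]
    exact Real.one_le_exp (by positivity)
  · have h1 := exp_le_interp hc hu
    have h2 := exp_le_interp hc hv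
    have key : p * Real.exp u + q * Real.exp v ≤ Real.cosh c := by
      have hs := add_le_add (mul_le_mul_of_nonneg_left h1 hp) (mul_le_mul_of_nonneg_left h2 hq)
      refine hs.trans (le_of_eq ?_)
      have e : p * (u / c) + q * (v / c) = 0 := by
        field_simp
        linear_combination hm
      linear_combination (Real.cosh c) * hpq + (Real.sinh c) * e
    exact key.trans (Real.cosh_le_exp_half_sq c)


lemma mgf_bound : ∀ (n : ℕ) (w : Fin n → Bool → ℝ),
    (∀ i b, 0 ≤ w i b) → (∀ i, w i false + w i true = 1) →
    ∀ (g : (Fin n → Bool) → ℝ) (D : Fin n → ℝ),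
    (∀ i x, |g x - g (Function.update x i (!x i))| ≤ D i) → ∀ t : ℝ,
    Ew n w (fun x => Real.exp (t * g x)) ≤
      Real.exp (t * Ew n w g + t ^ 2 / 2 * ∑ i, D i ^ 2) := by
  intro n
  induction n with
  | zero =>
    intro w hw0 hw1 g D hD t
    simp [Ew]
  | succ n ih =>
    intro w hw0 hw1 g D hD t
    have hdiff : ∀ (b : Bool) (i : Fin n) (y : Fin n → Bool),
        |g (Fin.cons b y) - g (Fin.cons b (Function.update y i (!y i)))| ≤ D i.succ := by
      intro b i y
      have h := hD i.succ (Fin.cons b y)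
      rw [Fin.cons_update]
      simpa [Fin.cons_succ] using h
    set w' : Fin n → Bool → ℝ := fun i => w i.succ with hw'
    set mb : Bool → ℝ := fun b => Ew n w' (fun y => g (Fin.cons b y)) with hmb
    have key : ∀ b : Bool, Ew n w' (fun y => Real.exp (t * g (Fin.cons b y))) ≤
        Real.exp (t * mb b + t ^ 2 / 2 * ∑ i : Fin n, D i.succ ^ 2) := fun b =>
      ih w' (fun i c => hw0 i.succ c) (fun i => hw1 i.succ)
        (fun y => g (Fin.cons b y)) (fun i => D i.succ) (hdiff b) t
    -- difference of the two conditional means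
    have hD0 : 0 ≤ D 0 := le_trans (abs_nonneg _) (hD 0 (Fin.cons true 0))
    have hmdiff : |mb false - mb true| ≤ D 0 := by
      rw [hmb, ← Ew_sub]
      refine abs_Ew_le (fun i c => hw0 i.succ c) (fun i => hw1 i.succ) ?_
      intro y
      have h := hD 0 (Fin.cons true y)
      rw [abs_sub_comm]
      simpa [Fin.cons_zero, Fin.update_cons_zero] using h
    set p := w 0 false with hp
    set q := w 0 true with hq
    have hp0 : 0 ≤ p := hw0 0 false
    have hq0 : 0 ≤ q := hw0 0 true
    have hpq : p + q = 1 := hw1 0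
    set m : ℝ := p * mb false + q * mb true with hm
    have hmean : Ew (n+1) w g = m := by
      rw [Ew_cons]
      simp [Fintype.sum_bool, hm, hmb]
      ring
    have hq1 : q ≤ 1 := by linarith
    have hp1 : p ≤ 1 := by linarith
    -- two-point step
    have hstep : p * Real.exp (t * mb false) + q * Real.exp (t * mb true) ≤
        Real.exp (t * m + t ^ 2 / 2 * D 0 ^ 2) := by
      have hu : |t * mb false - t * m| ≤ |t| * D 0 := by
        have : t * mb false - t * m = t * (q * (mb false - mb true)) := by
          rw [hm]; linear_combination (-(t * mb false)) * hpq
        rw [this, abs_mul, abs_mul]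
        refine mul_le_mul_of_nonneg_left ?_ (abs_nonneg t)
        calc |q| * |mb false - mb true| ≤ 1 * D 0 := by
              apply mul_le_mul (by rwa [abs_of_nonneg hq0]) hmdiff (abs_nonneg _) zero_le_one
          _ = D 0 := one_mul _
      have hv : |t * mb true - t * m| ≤ |t| * D 0 := by
        have : t * mb true - t * m = t * (p * (mb true - mb false)) := by
          rw [hm]; linear_combination (-(t * mb true)) * hpq
        rw [this, abs_mul, abs_mul]
        refine mul_le_mul_of_nonneg_left ?_ (abs_nonneg t)
        calc |p| * |mb true - mb false| ≤ 1 * D 0 := by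
              rw [abs_sub_comm]
              apply mul_le_mul (by rwa [abs_of_nonneg hp0]) hmdiff (abs_nonneg _) zero_le_one
          _ = D 0 := one_mul _
      have hmean0 : p * (t * mb false - t * m) + q * (t * mb true - t * m) = 0 := by
        rw [hm]; linear_combination (-(t * (p * mb false + q * mb true))) * hpq
      have h2 := two_point hp0 hq0 hpq hmean0 hu hv
      have hrw : ∀ b : Bool, Real.exp (t * mb b) =
          Real.exp (t * m) * Real.exp (t * mb b - t * m) := by
        intro b; rw [← Real.exp_add]; ring_nf
      rw [hrw false, hrw true]
      have hfinal : (|t| * D 0) ^ 2 / 2 = t ^ 2 / 2 * D 0 ^ 2 := by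
        rw [mul_pow, sq_abs]; ring
      calc p * (Real.exp (t * m) * Real.exp (t * mb false - t * m)) +
            q * (Real.exp (t * m) * Real.exp (t * mb true - t * m))
          = Real.exp (t * m) * (p * Real.exp (t * mb false - t * m) +
            q * Real.exp (t * mb true - t * m)) := by ring
        _ ≤ Real.exp (t * m) * Real.exp ((|t| * D 0) ^ 2 / 2) := by
            apply mul_le_mul_of_nonneg_left h2 (Real.exp_pos _).le
        _ = Real.exp (t * m + t ^ 2 / 2 * D 0 ^ 2) := by
            rw [← Real.exp_add, hfinal]
    -- assemble
    rw [Ew_cons, hmean, Fin.sum_univ_succ]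
    calc ∑ b : Bool, w 0 b * Ew n (fun i => w i.succ)
          (fun y => Real.exp (t * g (Fin.cons b y)))
        ≤ ∑ b : Bool, w 0 b * (Real.exp (t * mb b + t ^ 2 / 2 * ∑ i : Fin n, D i.succ ^ 2)) := by
          refine Finset.sum_le_sum fun b _ => mul_le_mul_of_nonneg_left (key b) (hw0 0 b)
      _ = (p * Real.exp (t * mb false) + q * Real.exp (t * mb true)) *
            Real.exp (t ^ 2 / 2 * ∑ i : Fin n, D i.succ ^ 2) := by
          simp [Fintype.sum_bool, Real.exp_add]
          ring
      _ ≤ Real.exp (t * m + t ^ 2 / 2 * D 0 ^ 2) *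
            Real.exp (t ^ 2 / 2 * ∑ i : Fin n, D i.succ ^ 2) := by
          apply mul_le_mul_of_nonneg_right hstep (Real.exp_pos _).le
      _ = Real.exp (t * m + t ^ 2 / 2 * (D 0 ^ 2 + ∑ i : Fin n, D i.succ ^ 2)) := by
          rw [← Real.exp_add]; ring_nf


lemma rpow_le_exp_aux {u q : ℝ} (hu : 0 ≤ u) (hq : 1 ≤ q) :
    u ^ q ≤ (q / Real.exp 1) ^ q * Real.exp u := by
  have hq0 : 0 < q := lt_of_lt_of_le one_pos hq
  rcases eq_or_lt_of_le hu with hu0 | hu0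
  · rw [← hu0, Real.zero_rpow (ne_of_gt hq0)]
    positivity
  · have hlog : Real.log (u / q) ≤ u / q - 1 := Real.log_le_sub_one_of_pos (by positivity)
    have hkey : Real.log u * q ≤ Real.log (q / Real.exp 1) * q + u := by
      rw [Real.log_div (ne_of_gt hq0) (ne_of_gt (Real.exp_pos 1)), Real.log_exp] at *
      rw [Real.log_div (ne_of_gt hu0) (ne_of_gt hq0)] at hlog
      have := mul_le_mul_of_nonneg_right hlog (le_of_lt hq0)
      rw [sub_mul, sub_mul, div_mul_cancel₀ _ (ne_of_gt hq0)] at this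
      nlinarith
    calc u ^ q = Real.exp (Real.log u * q) := by
          rw [Real.rpow_def_of_pos hu0]
      _ ≤ Real.exp (Real.log (q / Real.exp 1) * q + u) := Real.exp_le_exp.2 hkey
      _ = (q / Real.exp 1) ^ q * Real.exp u := by
          rw [Real.exp_add, Real.rpow_def_of_pos (by positivity)]

lemma abs_rpow_le_exp {z q lam : ℝ} (hq : 1 ≤ q) (hlam : 0 < lam) :
    |z| ^ q ≤ (q / (Real.exp 1 * lam)) ^ q *
      (Real.exp (lam * z) + Real.exp (-(lam * z))) := by
  have hlamq : 0 < lam ^ q := Real.rpow_pos_of_pos hlam q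
  have h1 : |z| ^ q = (lam * |z|) ^ q / lam ^ q := by
    rw [Real.mul_rpow (le_of_lt hlam) (abs_nonneg z), mul_comm, mul_div_assoc,
      div_self (ne_of_gt hlamq), mul_one]
  have h2 : (lam * |z|) ^ q ≤ (q / Real.exp 1) ^ q * Real.exp (lam * |z|) :=
    rpow_le_exp_aux (by positivity) hq
  have h3 : Real.exp (lam * |z|) ≤ Real.exp (lam * z) + Real.exp (-(lam * z)) := by
    rcases abs_cases z with ⟨h, _⟩ | ⟨h, _⟩
    · rw [h]; exact le_add_of_nonneg_right (Real.exp_pos _).le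
    · rw [h, mul_neg]
      exact le_add_of_nonneg_left (Real.exp_pos _).le
  have h4 : (q / Real.exp 1) ^ q / lam ^ q = (q / (Real.exp 1 * lam)) ^ q := by
    rw [← Real.div_rpow (by positivity) (le_of_lt hlam), div_div]
  calc |z| ^ q = (lam * |z|) ^ q / lam ^ q := h1
    _ ≤ ((q / Real.exp 1) ^ q * Real.exp (lam * |z|)) / lam ^ q := by
        exact div_le_div_of_nonneg_right h2 (le_of_lt hlamq)
    _ = (q / (Real.exp 1 * lam)) ^ q * Real.exp (lam * |z|) := by
        rw [← h4]; ring
    _ ≤ (q / (Real.exp 1 * lam)) ^ q * (Real.exp (lam * z) + Real.exp (-(lam * z))) := by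
        exact mul_le_mul_of_nonneg_left h3 (Real.rpow_nonneg (by positivity) q)


lemma cube_moment {n : ℕ} (w : Fin n → Bool → ℝ)
    (hw0 : ∀ i b, 0 ≤ w i b) (hw1 : ∀ i, w i false + w i true = 1)
    (g : (Fin n → Bool) → ℝ) (D : Fin n → ℝ)
    (hD : ∀ i x, |g x - g (Function.update x i (!x i))| ≤ D i)
    (q : ℝ) (hq : 1 ≤ q) (hS : 0 < ∑ i, D i ^ 2) :
    Ew n w (fun x => |g x - Ew n w g| ^ q) ≤
      2 * (Real.sqrt q * Real.sqrt (∑ i, D i ^ 2)) ^ q * Real.exp (-(q / 2)) := by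
  set S : ℝ := ∑ i, D i ^ 2 with hSdef
  set m : ℝ := Ew n w g with hmdef
  have hq0 : 0 < q := lt_of_lt_of_le one_pos hq
  set lam : ℝ := Real.sqrt q / Real.sqrt S with hlamdef
  have hlam : 0 < lam := div_pos (Real.sqrt_pos.2 hq0) (Real.sqrt_pos.2 hS)
  have hlamsq : lam ^ 2 * S = q := by
    rw [hlamdef, div_pow, Real.sq_sqrt (le_of_lt hq0), Real.sq_sqrt (le_of_lt hS),
      div_mul_cancel₀ _ (ne_of_gt hS)]
  -- centered mgf bound
  have hcent : ∀ t : ℝ, Ew n w (fun x => Real.exp (t * (g x - m))) ≤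
      Real.exp (t ^ 2 / 2 * S) := by
    intro t
    have hmgf := mgf_bound n w hw0 hw1 g D hD t
    have heq : Ew n w (fun x => Real.exp (t * (g x - m))) =
        Real.exp (-(t * m)) * Ew n w (fun x => Real.exp (t * g x)) := by
      rw [← Ew_const_mul]
      congr 1; funext x
      rw [← Real.exp_add]; ring_nf
    rw [heq]
    calc Real.exp (-(t * m)) * Ew n w (fun x => Real.exp (t * g x))
        ≤ Real.exp (-(t * m)) * Real.exp (t * m + t ^ 2 / 2 * S) :=
          mul_le_mul_of_nonneg_left hmgf (Real.exp_pos _).le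
      _ = Real.exp (t ^ 2 / 2 * S) := by rw [← Real.exp_add]; ring_nf
  have hps : ∀ x : Fin n → Bool, |g x - m| ^ q ≤ (q / (Real.exp 1 * lam)) ^ q *
      (Real.exp (lam * (g x - m)) + Real.exp (-(lam * (g x - m)))) :=
    fun x => abs_rpow_le_exp hq hlam
  have step1 : Ew n w (fun x => |g x - m| ^ q) ≤ (q / (Real.exp 1 * lam)) ^ q *
      (Ew n w (fun x => Real.exp (lam * (g x - m))) +
       Ew n w (fun x => Real.exp (-(lam * (g x - m))))) := by
    rw [← Ew_add, ← Ew_const_mul]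
    exact Ew_mono hw0 hps
  have hcent2 : Ew n w (fun x => Real.exp (-(lam * (g x - m)))) ≤
      Real.exp (lam ^ 2 / 2 * S) := by
    have := hcent (-lam)
    simp only [neg_mul, neg_sq] at this ⊢
    exact this
  have hexpq : lam ^ 2 / 2 * S = q / 2 := by rw [div_mul_eq_mul_div, hlamsq]
  have step2 : Ew n w (fun x => |g x - m| ^ q) ≤
      (q / (Real.exp 1 * lam)) ^ q * (2 * Real.exp (q / 2)) := by
    refine step1.trans ?_
    apply mul_le_mul_of_nonneg_left _ (Real.rpow_nonneg (by positivity) q)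
    have h1 := hcent lam
    rw [hexpq] at hcent2
    rw [div_mul_eq_mul_div, hlamsq] at h1
    linarith
  refine step2.trans (le_of_eq ?_)
  have hsq : Real.sqrt q * Real.sqrt q = q := Real.mul_self_sqrt (le_of_lt hq0)
  have hsS : (0:ℝ) < Real.sqrt S := Real.sqrt_pos.2 hS
  have hsQ : (0:ℝ) < Real.sqrt q := Real.sqrt_pos.2 hq0
  have hql : q / (Real.exp 1 * lam) = Real.sqrt q * Real.sqrt S / Real.exp 1 := by
    rw [hlamdef]
    field_simp
    linear_combination -hsq
  rw [hql, Real.div_rpow (by positivity) (Real.exp_pos 1).le, Real.exp_one_rpow]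
  have hxe : Real.exp (-(q / 2)) = Real.exp (q / 2) / Real.exp q := by
    rw [← Real.exp_sub]; ring_nf
  rw [hxe]; ring


lemma cube_main {n : ℕ} (w : Fin n → Bool → ℝ)
    (hw0 : ∀ i b, 0 ≤ w i b) (hw1 : ∀ i, w i false + w i true = 1)
    (g : (Fin n → Bool) → ℝ) (D : Fin n → ℝ)
    (hD : ∀ i x, |g x - g (Function.update x i (!x i))| ≤ D i)
    (q : ℝ) (hq : 1 ≤ q) (hS : 0 < ∑ i, D i ^ 2) :
    (Ew n w (fun x => |g x - Ew n w g| ^ q)) ^ (1 / q) ≤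
      Real.sqrt (Real.pi * q / 2) * Real.sqrt (∑ i, D i ^ 2) := by
  set S : ℝ := ∑ i, D i ^ 2 with hSdef
  have hq0 : 0 < q := lt_of_lt_of_le one_pos hq
  have hE0 : 0 ≤ Ew n w (fun x => |g x - Ew n w g| ^ q) :=
    Ew_nonneg hw0 fun x => Real.rpow_nonneg (abs_nonneg _) q
  have h1 := cube_moment w hw0 hw1 g D hD q hq hS
  have hA : 0 ≤ Real.sqrt q * Real.sqrt S := by positivity
  have h2 : (Ew n w (fun x => |g x - Ew n w g| ^ q)) ^ (1 / q) ≤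
      (2 * (Real.sqrt q * Real.sqrt S) ^ q * Real.exp (-(q / 2))) ^ (1 / q) :=
    Real.rpow_le_rpow hE0 h1 (by positivity)
  refine h2.trans ?_
  have hrw : (2 * (Real.sqrt q * Real.sqrt S) ^ q * Real.exp (-(q / 2))) ^ (1 / q) =
      (2 : ℝ) ^ (1 / q) * (Real.sqrt q * Real.sqrt S) * Real.exp (-(1 / 2)) := by
    rw [Real.mul_rpow (by positivity) (Real.exp_pos _).le,
      Real.mul_rpow (by norm_num) (Real.rpow_nonneg hA q)]
    congr 1
    · congr 1
      rw [← Real.rpow_mul hA, mul_one_div_cancel (ne_of_gt hq0), Real.rpow_one]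
    · rw [← Real.exp_mul]
      congr 1
      field_simp
  rw [hrw]
  -- numeric constant: 2^(1/q) * exp(-1/2) ≤ sqrt (pi/2)
  have hnum : (2 : ℝ) ^ (1 / q) * Real.exp (-(1 / 2)) ≤ Real.sqrt (Real.pi / 2) := by
    have h21 : (2 : ℝ) ^ (1 / q) ≤ 2 := by
      calc (2 : ℝ) ^ (1 / q) ≤ (2 : ℝ) ^ (1 : ℝ) :=
            Real.rpow_le_rpow_of_exponent_le (by norm_num)
              (by rw [div_le_one hq0]; exact hq)
        _ = 2 := Real.rpow_one 2
    have hstep : (2 : ℝ) ^ (1 / q) * Real.exp (-(1 / 2)) ≤ 2 * Real.exp (-(1 / 2)) :=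
      mul_le_mul_of_nonneg_right h21 (Real.exp_pos _).le
    refine hstep.trans ?_
    rw [Real.le_sqrt (by positivity) (by positivity)]
    have hee : Real.exp (-(1 / 2 : ℝ)) * Real.exp (-(1 / 2 : ℝ)) = Real.exp (-1) := by
      rw [← Real.exp_add]; norm_num
    have hpi := Real.pi_gt_d6
    have he1 := Real.exp_one_gt_d9
    have hepos := Real.exp_pos 1
    have hgoal : 4 * Real.exp (-1 : ℝ) ≤ Real.pi / 2 := by
      rw [Real.exp_neg, inv_eq_one_div, mul_one_div, div_le_div_iff₀ hepos two_pos]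
      nlinarith [hpi, he1]
    calc (2 * Real.exp (-(1 / 2 : ℝ))) ^ 2 = 4 * Real.exp (-1) := by
          rw [mul_pow, sq (Real.exp _), hee]; norm_num
      _ ≤ Real.pi / 2 := hgoal
  -- combine
  have hsplit : Real.sqrt (Real.pi * q / 2) = Real.sqrt (Real.pi / 2) * Real.sqrt q := by
    rw [← Real.sqrt_mul (by positivity)]
    congr 1
    ring
  rw [hsplit]
  calc (2 : ℝ) ^ (1 / q) * (Real.sqrt q * Real.sqrt S) * Real.exp (-(1 / 2))
      = ((2 : ℝ) ^ (1 / q) * Real.exp (-(1 / 2))) * (Real.sqrt q * Real.sqrt S) := by ring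
    _ ≤ Real.sqrt (Real.pi / 2) * (Real.sqrt q * Real.sqrt S) :=
        mul_le_mul_of_nonneg_right hnum hA
    _ = Real.sqrt (Real.pi / 2) * Real.sqrt q * Real.sqrt S := by ring


lemma const_of_flip {f : (Fin n → Bool) → ℝ}
    (h : ∀ i x, f (Function.update x i (!x i)) = f x) (x y : Fin n → Bool) :
    f x = f y := by
  classical
  have hupd : ∀ (x : Fin n → Bool) (i : Fin n) (b : Bool),
      f (Function.update x i b) = f x := by
    intro x i b
    by_cases hb : b = x i
    · rw [hb, Function.update_eq_self]
    · have hb' : b = !x i := by cases b <;> cases hxi : x i <;> simp_all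
      rw [hb', h]
  suffices H : ∀ s : Finset (Fin n), ∀ x y : Fin n → Bool,
      (∀ i, i ∉ s → x i = y i) → f x = f y by
    exact H Finset.univ x y (fun i hi => absurd (Finset.mem_univ i) hi)
  intro s
  induction s using Finset.induction_on with
  | empty =>
    intro x y hxy
    congr 1
    funext i
    exact hxy i (Finset.notMem_empty i)
  | insert j s hj ih =>
    intro x y hxy
    refine (hupd x j (y j)).symm.trans (ih _ y fun i hi => ?_)
    rcases eq_or_ne i j with rfl | hij
    · simp
    · rw [Function.update_of_ne hij]
      exact hxy i (by simp [Finset.mem_insert, hij, hi])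


theorem stmt_3_aux {Ω : Type*} [MeasureSpace Ω] [IsProbabilityMeasure (ℙ : Measure Ω)]
    {n : ℕ} (W : Fin n → Ω → Bool) (hmeas : ∀ i, Measurable (W i))
    (hindep : iIndepFun W ℙ)
    (f : (Fin n → Bool) → ℝ)
    (Δ : Fin n → ℝ)
    (hΔ : ∀ i, Δ i = ⨆ x : Fin n → Bool, |f x - f (Function.update x i (!x i))|)
    (q : ℝ) (hq : 1 ≤ q) :
    (∫ ω, |f (fun i => W i ω) - ∫ ω', f (fun i => W i ω') ∂ℙ| ^ q ∂ℙ) ^ (1 / q)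
      ≤ Real.sqrt (Real.pi * q / 2) * Real.sqrt (∑ i, Δ i ^ 2) := by
  classical
  have hq0 : 0 < q := lt_of_lt_of_le one_pos hq
  set w : Fin n → Bool → ℝ := fun i b => (ℙ (W i ⁻¹' {b})).toReal with hwdef
  have hWm : Measurable (fun ω => fun i => W i ω) :=
    measurable_pi_lambda _ hmeas
  set μ : Measure (Fin n → Bool) := Measure.map (fun ω i => W i ω) ℙ with hμdef
  have : IsProbabilityMeasure μ := Measure.isProbabilityMeasure_map hWm.aemeasurable
  have hw0 : ∀ i b, 0 ≤ w i b := fun i b => ENNReal.toReal_nonneg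
  have hw1 : ∀ i, w i false + w i true = 1 := by
    intro i
    rw [hwdef]
    simp only
    rw [← ENNReal.toReal_add (measure_ne_top _ _) (measure_ne_top _ _)]
    rw [← measure_union ?_ ((measurableSet_singleton true).preimage (hmeas i))]
    · rw [show (W i ⁻¹' {false}) ∪ (W i ⁻¹' {true}) = Set.univ from ?_]
      · simp
      · ext ω
        simp only [Set.mem_union, Set.mem_preimage, Set.mem_singleton_iff, Set.mem_univ,
          iff_true]
        cases W i ω <;> simp
    · rw [Set.disjoint_left]
      intro ω h1 h2
      simp only [Set.mem_preimage, Set.mem_singleton_iff] at h1 h2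
      rw [h1] at h2
      exact Bool.false_ne_true h2
  have hμx : ∀ x : Fin n → Bool, (μ {x}).toReal = ∏ i, w i (x i) := by
    intro x
    rw [hμdef, Measure.map_apply hWm (measurableSet_singleton x)]
    have hpre : (fun ω i => W i ω) ⁻¹' {x} = ⋂ i, W i ⁻¹' {x i} := by
      ext ω
      simp [Set.mem_iInter, funext_iff]
    rw [hpre]
    have hiInter : (⋂ i, W i ⁻¹' {x i}) = ⋂ i ∈ Finset.univ, W i ⁻¹' {x i} := by
      simp
    rw [hiInter, hindep.measure_inter_preimage_eq_mul Finset.univ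
      (fun i _ => measurableSet_singleton (x i))]
    rw [ENNReal.toReal_prod]
  have hInt : ∀ h : (Fin n → Bool) → ℝ,
      ∫ ω, h (fun i => W i ω) ∂ℙ = Ew n w h := by
    intro h
    have h1 : ∫ ω, h (fun i => W i ω) ∂ℙ = ∫ x, h x ∂μ := by
      rw [hμdef, integral_map hWm.aemeasurable]
      exact (Integrable.of_finite (μ := μ) (f := h)).aestronglyMeasurable
    rw [h1, integral_fintype (Integrable.of_finite), Ew]
    congr 1
    funext x
    rw [measureReal_def, hμx x, smul_eq_mul]
  have hD : ∀ i x, |f x - f (Function.update x i (!x i))| ≤ Δ i := by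
    intro i x
    rw [hΔ i]
    exact le_ciSup (f := fun y : Fin n → Bool => |f y - f (Function.update y i (!y i))|)
      (Set.Finite.bddAbove (Set.finite_range _)) x
  have hm : ∫ ω', f (fun i => W i ω') ∂ℙ = Ew n w f := hInt f
  rw [hm, hInt (fun x => |f x - Ew n w f| ^ q)]
  rcases eq_or_lt_of_le (Finset.sum_nonneg fun i _ => sq_nonneg (Δ i)) with hS | hS
  · -- degenerate case: all Δ i = 0, f is constant
    have hΔ0 : ∀ i, Δ i = 0 := by
      intro i
      have h1 := (Finset.sum_eq_zero_iff_of_nonneg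
        (fun j _ => sq_nonneg (Δ j))).1 hS.symm i (Finset.mem_univ i)
      exact (pow_eq_zero_iff two_ne_zero).1 h1
    have hflip : ∀ i x, f (Function.update x i (!x i)) = f x := by
      intro i x
      have := hD i x
      rw [hΔ0 i] at this
      have h0 := abs_nonpos_iff.1 this
      linarith [sub_eq_zero.1 h0]
    have hconst : ∀ x : Fin n → Bool, f x = f (fun _ => false) :=
      fun x => const_of_flip hflip x _
    have hmf : Ew n w f = f (fun _ => false) := by
      have : f = fun _ => f (fun _ => false) := funext hconst
      rw [this, Ew_const w hw1]
    have hzero : Ew n w (fun x => |f x - Ew n w f| ^ q) = 0 := by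
      have : (fun x : Fin n → Bool => |f x - Ew n w f| ^ q) = fun _ => 0 := by
        funext x
        rw [hmf, hconst x, sub_self, abs_zero, Real.zero_rpow (ne_of_gt hq0)]
      rw [this, Ew_const w hw1]
    rw [hzero, Real.zero_rpow (by positivity : (1:ℝ)/q ≠ 0)]
    positivity
  · exact cube_main w hw0 hw1 f Δ hD q hq hS


end McdAux

/-- Moment bound from the method of bounded differences:
`‖f(W) - E f(W)‖_q ≤ sqrt(π q / 2) ‖Δf‖₂` for independent Bernoulli coordinates. -/
theorem stmt_3 {Ω : Type*} [MeasureSpace Ω] [IsProbabilityMeasure (ℙ : Measure Ω)]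
    {n : ℕ} (W : Fin n → Ω → Bool) (hmeas : ∀ i, Measurable (W i))
    (hindep : iIndepFun W ℙ)
    (f : (Fin n → Bool) → ℝ)
    (Δ : Fin n → ℝ)
    (hΔ : ∀ i, Δ i = ⨆ x : Fin n → Bool, |f x - f (Function.update x i (!x i))|)
    (q : ℝ) (hq : 1 ≤ q) :
    (∫ ω, |f (fun i => W i ω) - ∫ ω', f (fun i => W i ω') ∂ℙ| ^ q ∂ℙ) ^ (1 / q)
      ≤ Real.sqrt (Real.pi * q / 2) * Real.sqrt (∑ i, Δ i ^ 2) := by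
  exact McdAux.stmt_3_aux W hmeas hindep f Δ hΔ q hq
end

section
/- Let f ∈ C²([0,1]^n) and let W_1,…,W_n be independent random variables taking values in [0,1] with means p_i = E W_i. Then |E f(W) − f(p)| ≤ (1/2) Σ_{i=1}^n ‖∂_i² f‖_∞, where p = (p_1,…,p_n). -/
open MeasureTheory ProbabilityTheory Set
open scoped ENNReal NNReal

lemma taylor2 {g : ℝ → ℝ} {C q w : ℝ} (hg : ContDiff ℝ 2 g)
    (hC : ∀ s ∈ Set.uIcc q w, |deriv (deriv g) s| ≤ C) :
    |g w - g q - deriv g q * (w - q)| ≤ C / 2 * (w - q) ^ 2 := by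
  have hg' : ContDiff ℝ 1 (deriv g) := by
    have := (contDiff_succ_iff_deriv (n := 1)).mp (by exact_mod_cast hg)
    exact this.2.2
  have hgd : Differentiable ℝ g := hg.differentiable (by norm_num)
  have hgd' : Differentiable ℝ (deriv g) := hg'.differentiable (by norm_num)
  -- Lipschitz-type bound on deriv g
  have key : ∀ s ∈ Set.uIcc q w, |deriv g s - deriv g q| ≤ C * |s - q| := by
    intro s hs
    have := (convex_uIcc q w).norm_image_sub_le_of_norm_deriv_le (f := deriv g)
      (fun x _ => (hgd' x)) (fun x hx => hC x hx) (Set.left_mem_uIcc) hs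
    simpa [Real.norm_eq_abs] using this
  have hFTC : g w - g q = ∫ s in q..w, deriv g s :=
    (intervalIntegral.integral_deriv_eq_sub (fun x _ => hgd x)
      ((hg'.continuous.intervalIntegrable q w))).symm
  have hconst : deriv g q * (w - q) = ∫ s in q..w, deriv g q := by
    simp [intervalIntegral.integral_const]; ring
  have hsub : g w - g q - deriv g q * (w - q)
      = ∫ s in q..w, (deriv g s - deriv g q) := by
    rw [hFTC, hconst, intervalIntegral.integral_sub
      (hg'.continuous.intervalIntegrable q w)
      (intervalIntegrable_const)]
  rw [hsub]
  rcases le_total q w with h | h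
  · have h1 : |∫ s in q..w, (deriv g s - deriv g q)| ≤ ∫ s in q..w, |deriv g s - deriv g q| := by
      simpa [Real.norm_eq_abs] using
        intervalIntegral.norm_integral_le_integral_norm (f := fun s => deriv g s - deriv g q)
          (a := q) (b := w) h
    have h2 : (∫ s in q..w, |deriv g s - deriv g q|) ≤ ∫ s in q..w, C * (s - q) := by
      apply intervalIntegral.integral_mono_on h
      · exact ((hg'.continuous.sub continuous_const).abs.intervalIntegrable q w)
      · exact ((continuous_const.mul (continuous_id.sub continuous_const)).intervalIntegrable q w)
      · intro s hs
        have hs' : s ∈ Set.uIcc q w := by rw [Set.uIcc_of_le h]; exact hs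
        have hk := key s hs'
        have h4 : |s - q| = s - q := abs_of_nonneg (by linarith [hs.1])
        rw [h4] at hk
        exact hk
    have h3 : (∫ s in q..w, C * (s - q)) = C / 2 * (w - q) ^ 2 := by
      rw [intervalIntegral.integral_const_mul]
      have hv : (∫ s in q..w, (s - q)) = (w - q) ^ 2 / 2 := by
        rw [intervalIntegral.integral_comp_sub_right (fun x => x) q]
        rw [integral_id]
        ring
      rw [hv]; ring
    calc |∫ s in q..w, (deriv g s - deriv g q)| ≤ _ := h1
      _ ≤ _ := h2
      _ = _ := h3
  · have flip : (∫ s in q..w, (deriv g s - deriv g q))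
        = -∫ s in w..q, (deriv g s - deriv g q) := by
      rw [intervalIntegral.integral_symm]
    rw [flip, abs_neg]
    have h1 : |∫ s in w..q, (deriv g s - deriv g q)| ≤ ∫ s in w..q, |deriv g s - deriv g q| := by
      simpa [Real.norm_eq_abs] using
        intervalIntegral.norm_integral_le_integral_norm (f := fun s => deriv g s - deriv g q)
          (a := w) (b := q) h
    have h2 : (∫ s in w..q, |deriv g s - deriv g q|) ≤ ∫ s in w..q, C * (q - s) := by
      apply intervalIntegral.integral_mono_on h
      · exact ((hg'.continuous.sub continuous_const).abs.intervalIntegrable w q)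
      · exact ((continuous_const.mul (continuous_const.sub continuous_id)).intervalIntegrable w q)
      · intro s hs
        have hs' : s ∈ Set.uIcc q w := by rw [Set.uIcc_of_ge h]; exact hs
        have hk := key s hs'
        have h4 : |s - q| = q - s := by
          rw [abs_of_nonpos (by linarith [hs.2])]; ring
        rw [h4] at hk
        exact hk
    have h3 : (∫ s in w..q, C * (q - s)) = C / 2 * (w - q) ^ 2 := by
      rw [intervalIntegral.integral_const_mul]
      have he : (∫ s in w..q, (q - s)) = ∫ s in w..q, -(s - q) := by
        congr 1; funext s; ring
      have hv : (∫ s in w..q, (q - s)) = (w - q) ^ 2 / 2 := by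
        rw [he, intervalIntegral.integral_neg,
          intervalIntegral.integral_comp_sub_right (fun x => x) q, integral_id]
        ring
      rw [hv]; ring
    calc |∫ s in w..q, (deriv g s - deriv g q)| ≤ _ := h1
      _ ≤ _ := h2
      _ = _ := h3

/-- Lindeberg replacement bound: `|E f(W) - f(p)| ≤ (1/2) Σ_i ‖∂_i² f‖_∞` for
independent `[0,1]`-valued `W_i` with means `p_i` and `f ∈ C²`. -/
theorem stmt_4 {Ω : Type*} [MeasureSpace Ω] [IsProbabilityMeasure (ℙ : Measure Ω)]
    {n : ℕ} (W : Fin n → Ω → ℝ) (hmeas : ∀ i, Measurable (W i))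
    (hrange : ∀ i ω, W i ω ∈ Set.Icc (0 : ℝ) 1)
    (hindep : iIndepFun W ℙ)
    (f : (Fin n → ℝ) → ℝ) (hf : ContDiff ℝ 2 f)
    (p : Fin n → ℝ) (hp : ∀ i, p i = ∫ ω, W i ω ∂ℙ)
    (M : Fin n → ℝ)
    (hM : ∀ i, ∀ x ∈ Set.Icc (0 : Fin n → ℝ) 1,
      |deriv (deriv (fun t => f (Function.update x i t))) (x i)| ≤ M i) :
    |(∫ ω, f (fun i => W i ω) ∂ℙ) - f p| ≤ (1 / 2) * ∑ i, M i := by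
  classical
  have hWint : ∀ i, Integrable (W i) ℙ := by
    intro i
    refine (integrable_const (1:ℝ)).mono' (hmeas i).aestronglyMeasurable
      (ae_of_all _ fun ω => ?_)
    have h1 := (hrange i ω).1; have h2 := (hrange i ω).2
    rw [Real.norm_eq_abs, abs_le]; constructor <;> [linarith; linarith]
  have hp01 : ∀ i, p i ∈ Set.Icc (0:ℝ) 1 := by
    intro i
    rw [hp i]
    constructor
    · exact integral_nonneg fun ω => (hrange i ω).1
    · calc ∫ ω, W i ω ∂ℙ ≤ ∫ _, (1:ℝ) ∂ℙ :=
          integral_mono (hWint i) (integrable_const 1) (fun ω => (hrange i ω).2)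
        _ = 1 := by simp
  have hpmem : p ∈ Set.Icc (0 : Fin n → ℝ) 1 := by
    rw [Set.mem_Icc]
    exact ⟨fun i => (hp01 i).1, fun i => (hp01 i).2⟩
  set mix : ℕ → Ω → (Fin n → ℝ) := fun k ω i => if (i:ℕ) < k then p i else W i ω with hmixdef
  have hmixmem : ∀ k ω, mix k ω ∈ Set.Icc (0 : Fin n → ℝ) 1 := by
    intro k ω
    rw [Set.mem_Icc]
    constructor <;> intro i <;> simp only [hmixdef, Pi.zero_apply, Pi.one_apply] <;>
      split_ifs
    · exact (hp01 i).1
    · exact (hrange i ω).1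
    · exact (hp01 i).2
    · exact (hrange i ω).2
  have hmixmeas : ∀ k, Measurable (mix k) := by
    intro k
    apply measurable_pi_lambda
    intro i
    simp only [hmixdef]
    split_ifs
    · exact measurable_const
    · exact hmeas i
  have hcpt : IsCompact (Set.Icc (0 : Fin n → ℝ) 1) := isCompact_Icc
  obtain ⟨Cf, hCf⟩ := hcpt.exists_bound_of_continuousOn hf.continuous.continuousOn
  have hint : ∀ k, Integrable (fun ω => f (mix k ω)) ℙ := by
    intro k
    exact (integrable_const Cf).mono'
      ((hf.continuous.measurable.comp (hmixmeas k)).aestronglyMeasurable)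
      (ae_of_all _ fun ω => hCf _ (hmixmem k ω))
  set F : ℕ → ℝ := fun k => ∫ ω, f (mix k ω) ∂ℙ with hFdef
  have hF0 : F 0 = ∫ ω, f (fun i => W i ω) ∂ℙ := by
    simp only [hFdef, hmixdef, Nat.not_lt_zero, if_false]
  have hFn : F n = f p := by
    have hmixn : ∀ ω, mix n ω = p := by
      intro ω; funext i; simp [hmixdef, i.isLt]
    simp only [hFdef, hmixn]
    simp
  -- key one-coordinate step
  have key : ∀ k : Fin n, |F k - F ((k:ℕ)+1)| ≤ 1/2 * M k := by
    intro k
    have hMk0 : 0 ≤ M k := le_trans (abs_nonneg _) (hM k p hpmem)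
    have hxk : ∀ ω, mix k ω k = W k ω := by
      intro ω; simp [hmixdef]
    have hmixsucc : ∀ ω, mix ((k:ℕ)+1) ω = Function.update (mix k ω) k (p k) := by
      intro ω; funext i
      by_cases hik : i = k
      · subst hik
        simp [hmixdef, Nat.lt_succ_self]
      · have hvne : (i:ℕ) ≠ (k:ℕ) := fun h => hik (Fin.ext h)
        rw [Function.update_of_ne hik]
        simp only [hmixdef]
        by_cases h2 : (i:ℕ) < (k:ℕ)
        · rw [if_pos (by omega), if_pos h2]
        · rw [if_neg (by omega), if_neg h2]
    set h : (Fin n → ℝ) → ℝ :=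
      fun x => fderiv ℝ f (Function.update x k (p k)) (Pi.single k 1) with hhdef
    have hderiv : ∀ (x : Fin n → ℝ) (t : ℝ),
        HasDerivAt (fun u => f (Function.update x k u))
          (fderiv ℝ f (Function.update x k t) (Pi.single k 1)) t := by
      intro x t
      exact ((hf.differentiable (by norm_num) _).hasFDerivAt).comp_hasDerivAt t
        (hasDerivAt_update x k t)
    have hh_cont : Continuous h := by
      have h1 : Continuous (fderiv ℝ f) := hf.continuous_fderiv (by norm_num)
      exact (ContinuousLinearMap.apply ℝ ℝ (Pi.single k (1:ℝ))).continuous.comp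
        (h1.comp (continuous_id.update k continuous_const))
    obtain ⟨Ch, hCh⟩ := hcpt.exists_bound_of_continuousOn hh_cont.continuousOn
    have hCh0 : 0 ≤ Ch := le_trans (norm_nonneg _) (hCh p hpmem)
    have hh_congr : ∀ x y : Fin n → ℝ, (∀ j, j ≠ k → x j = y j) → h x = h y := by
      intro x y hxy
      have : Function.update x k (p k) = Function.update y k (p k) := by
        funext j
        by_cases hj : j = k
        · subst hj; simp
        · rw [Function.update_of_ne hj, Function.update_of_ne hj, hxy j hj]
      simp only [hhdef, this]
    -- pointwise Taylor bound
    have taylor : ∀ ω, |f (mix k ω) - f (mix ((k:ℕ)+1) ω)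
        - h (mix k ω) * (W k ω - p k)| ≤ 1/2 * M k := by
      intro ω
      set x := mix k ω with hxdef
      set g : ℝ → ℝ := fun t => f (Function.update x k t) with hgdef
      have hg : ContDiff ℝ 2 g := hf.comp (contDiff_update 2 x k)
      have hC : ∀ s ∈ Set.uIcc (p k) (W k ω), |deriv (deriv g) s| ≤ M k := by
        intro s hs
        have hs01 : s ∈ Set.Icc (0:ℝ) 1 :=
          Set.uIcc_subset_Icc (hp01 k) (hrange k ω) hs
        set y := Function.update x k s with hydef
        have hy : y ∈ Set.Icc (0 : Fin n → ℝ) 1 := by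
          rw [Set.mem_Icc]
          constructor <;> intro j <;> by_cases hj : j = k
          · subst hj; simpa [hydef] using hs01.1
          · rw [Set.mem_Icc] at *
            simpa [hydef, Function.update_of_ne hj] using (hmixmem k ω).1 j
          · subst hj; simpa [hydef] using hs01.2
          · simpa [hydef, Function.update_of_ne hj] using (hmixmem k ω).2 j
        have hMy := hM k y hy
        have e1 : (fun t => f (Function.update y k t)) = g := by
          funext t; rw [hgdef]; simp [hydef, Function.update_idem]
        have e2 : y k = s := by simp [hydef]
        rwa [e1, e2] at hMy
      have hTT := taylor2 hg hC
      have hgq : deriv g (p k) = h x := ((hderiv x (p k)).deriv)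
      have hupd : Function.update x k (W k ω) = x := by
        rw [← hxk ω]; exact Function.update_eq_self k x
      have hgw : g (W k ω) = f (mix k ω) := by
        calc g (W k ω) = f (Function.update x k (W k ω)) := rfl
          _ = f x := by rw [hupd]
          _ = f (mix k ω) := by rw [hxdef]
      have hgp : g (p k) = f (mix ((k:ℕ)+1) ω) := by
        calc g (p k) = f (Function.update x k (p k)) := rfl
          _ = f (mix ((k:ℕ)+1) ω) := by rw [hmixsucc ω, ← hxdef]
      rw [hgq, hgw, hgp] at hTT
      have hsq : (W k ω - p k) ^ 2 ≤ 1 := by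
        have h1 := (hrange k ω).1; have h2 := (hrange k ω).2
        have h3 := (hp01 k).1; have h4 := (hp01 k).2
        nlinarith
      calc |f (mix k ω) - f (mix ((k:ℕ)+1) ω) - h x * (W k ω - p k)|
          ≤ M k / 2 * (W k ω - p k) ^ 2 := hTT
        _ ≤ 1/2 * M k := by nlinarith
    set D : Ω → ℝ := fun ω => h (mix k ω) with hDdef
    have hDmeas : Measurable D := hh_cont.measurable.comp (hmixmeas k)
    have hDbd : ∀ ω, ‖D ω‖ ≤ Ch := fun ω => hCh _ (hmixmem k ω)
    have hDint : Integrable D ℙ :=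
      (integrable_const Ch).mono' hDmeas.aestronglyMeasurable (ae_of_all _ hDbd)
    have hWkint : Integrable (fun ω => W k ω - p k) ℙ :=
      (hWint k).sub (integrable_const _)
    have hGint : Integrable (fun ω => D ω * (W k ω - p k)) ℙ := by
      refine (integrable_const Ch).mono'
        ((hDmeas.mul ((hmeas k).sub measurable_const)).aestronglyMeasurable)
        (ae_of_all _ fun ω => ?_)
      rw [Real.norm_eq_abs, abs_mul]
      have h1 : |W k ω - p k| ≤ 1 := by
        have := (hrange k ω).1; have := (hrange k ω).2
        have := (hp01 k).1; have := (hp01 k).2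
        rw [abs_le]; constructor <;> linarith
      calc |D ω| * |W k ω - p k| ≤ Ch * 1 :=
          mul_le_mul (by simpa [Real.norm_eq_abs] using hDbd ω) h1 (abs_nonneg _) hCh0
        _ = Ch := mul_one Ch
    -- independence
    have hindep2 : IndepFun D (fun ω => W k ω - p k) ℙ := by
      set Sc : Finset (Fin n) := Finset.univ.erase k with hScdef
      have hdisj : Disjoint Sc ({k} : Finset (Fin n)) :=
        Finset.disjoint_singleton_right.mpr (Finset.notMem_erase k _)
      have base := hindep.indepFun_finset Sc {k} hdisj hmeas
      set Φ : ({j // j ∈ Sc} → ℝ) → ℝ := fun y =>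
        h (fun j => if hj : j ∈ Sc then (if (j:ℕ) < (k:ℕ) then p j else y ⟨j, hj⟩) else 0)
        with hΦdef
      set Ψ : ({j // j ∈ ({k} : Finset (Fin n))} → ℝ) → ℝ := fun y =>
        y ⟨k, Finset.mem_singleton_self k⟩ - p k with hΨdef
      have hΦmeas : Measurable Φ := by
        apply hh_cont.measurable.comp
        apply measurable_pi_lambda
        intro j
        by_cases hj : j ∈ Sc
        · simp only [dif_pos hj]
          split_ifs
          · exact measurable_const
          · exact measurable_pi_apply _
        · simp only [dif_neg hj]
          exact measurable_const
      have hΨmeas : Measurable Ψ :=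
        (measurable_pi_apply _).sub measurable_const
      have hcomp := base.comp hΦmeas hΨmeas
      have e1 : Φ ∘ (fun ω (i : Sc) => W i ω) = D := by
        funext ω
        simp only [Function.comp_apply, hΦdef, hDdef]
        apply hh_congr
        intro j hj
        have hjSc : j ∈ Sc := Finset.mem_erase.mpr ⟨hj, Finset.mem_univ j⟩
        simp only [dif_pos hjSc, hmixdef]
      have e2 : Ψ ∘ (fun ω (i : ({k} : Finset (Fin n))) => W i ω)
          = fun ω => W k ω - p k := by
        funext ω
        simp [hΨdef]
      rwa [e1, e2] at hcomp
    have hzero : ∫ ω, D ω * (W k ω - p k) ∂ℙ = 0 := by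
      have hmul := hindep2.integral_fun_mul_eq_mul_integral hDint.aestronglyMeasurable hWkint.aestronglyMeasurable
      have hWk0 : ∫ ω, (W k ω - p k) ∂ℙ = 0 := by
        rw [integral_sub (hWint k) (integrable_const _)]
        simp [hp k]
      calc ∫ ω, D ω * (W k ω - p k) ∂ℙ
          = (∫ ω, D ω ∂ℙ) * ∫ ω, (W k ω - p k) ∂ℙ := hmul
        _ = 0 := by rw [hWk0, mul_zero]
    have hRint : Integrable
        (fun ω => f (mix k ω) - f (mix ((k:ℕ)+1) ω) - D ω * (W k ω - p k)) ℙ :=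
      ((hint k).sub (hint ((k:ℕ)+1))).sub hGint
    have hsplit : F k - F ((k:ℕ)+1)
        = (∫ ω, D ω * (W k ω - p k) ∂ℙ)
          + ∫ ω, (f (mix k ω) - f (mix ((k:ℕ)+1) ω) - D ω * (W k ω - p k)) ∂ℙ := by
      rw [← integral_add hGint hRint]
      simp only [hFdef]
      rw [← integral_sub (hint k) (hint ((k:ℕ)+1))]
      congr 1
      funext ω
      ring
    rw [hsplit, hzero, zero_add]
    have hb : ∀ ω, ‖f (mix k ω) - f (mix ((k:ℕ)+1) ω) - D ω * (W k ω - p k)‖ ≤ 1/2 * M k := by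
      intro ω
      simpa [Real.norm_eq_abs, hDdef] using taylor ω
    have := norm_integral_le_of_norm_le_const (μ := ℙ)
      (f := fun ω => f (mix k ω) - f (mix ((k:ℕ)+1) ω) - D ω * (W k ω - p k))
      (ae_of_all _ hb)
    simpa [Real.norm_eq_abs, measure_univ] using this
  -- telescoping
  have tel : (∫ ω, f (fun i => W i ω) ∂ℙ) - f p = ∑ k : Fin n, (F k - F ((k:ℕ)+1)) := by
    rw [← hF0, ← hFn]
    rw [Fin.sum_univ_eq_sum_range (fun k => F k - F (k+1)) n]
    exact (Finset.sum_range_sub' F n).symm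
  rw [tel]
  calc |∑ k : Fin n, (F k - F ((k:ℕ)+1))| ≤ ∑ k : Fin n, |F k - F ((k:ℕ)+1)| :=
      Finset.abs_sum_le_sum_abs _ _
    _ ≤ ∑ k : Fin n, 1/2 * M k := Finset.sum_le_sum fun k _ => key k
    _ = 1/2 * ∑ k, M k := (Finset.mul_sum _ _ _).symm
end

section
/- Let W_1,…,W_n be independent {0,1}-valued random variables and f: {0,1}^n → ℝ. Then ‖f(W) − E f(W)‖_Ψ ≤ √(3/2) ‖Δf‖₂, where Ψ(x) = e^{x²} − 1, ‖·‖_Ψ is the associated Orlicz norm, and ‖Δf‖₂² = Σ_{i=1}^n ‖Δ_i f‖_∞². -/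
open MeasureTheory ProbabilityTheory Real
open scoped ENNReal NNReal


lemma my_exp_abs_le (x : ℝ) : Real.exp |x| ≤ (2 + x^2) * Real.exp (x^2/4) := by
  rcases le_total (|x|) (6/7) with h | h
  · have h1 : |x| - x^2/4 ≤ 33/49 := by
      have h0 : 0 ≤ |x| := abs_nonneg x
      nlinarith [sq_abs x]
    have : Real.exp |x| ≤ Real.exp (33/49) * Real.exp (x^2/4) := by
      rw [← Real.exp_add]; exact Real.exp_le_exp.2 (by linarith)
    refine this.trans ?_
    have h2 : Real.exp (33/49) ≤ 2 := by
      rw [show (2:ℝ) = Real.exp (Real.log 2) by rw [Real.exp_log]; norm_num]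
      exact Real.exp_le_exp.2 (by nlinarith [Real.log_two_gt_d9])
    nlinarith [Real.exp_pos (x^2/4), sq_nonneg x]
  · have h1 : |x| - x^2/4 ≤ 1 := by
      have := sq_abs x
      nlinarith [sq_nonneg (|x| - 2)]
    have : Real.exp |x| ≤ Real.exp 1 * Real.exp (x^2/4) := by
      rw [← Real.exp_add]; exact Real.exp_le_exp.2 (by linarith)
    refine this.trans ?_
    have h2 : Real.exp 1 ≤ 2 + 36/49 := by nlinarith [Real.exp_one_lt_d9]
    have h3 : (6/7:ℝ)^2 ≤ x^2 := by
      rw [← sq_abs x]; exact pow_le_pow_left₀ (by norm_num) h (2)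
    nlinarith [Real.exp_pos (x^2/4)]

lemma two_point_core {p q : ℝ} (hp : 0 ≤ p) (hq : 0 ≤ q) (hpq : p + q = 1) (x : ℝ) :
    q * Real.exp (-(p*x)) + p * Real.exp (q*x) ≤ Real.exp (x^2/4) := by
  set G : ℝ → ℝ := fun x => Real.exp (x^2/4) - (q * Real.exp (-(p*x)) + p * Real.exp (q*x)) with hG
  set G1 : ℝ → ℝ := fun x => x/2 * Real.exp (x^2/4) + p*q*Real.exp (-(p*x)) - p*q*Real.exp (q*x) with hG1
  set G2 : ℝ → ℝ := fun x => (1/2 + x^2/4) * Real.exp (x^2/4) - p^2*q*Real.exp (-(p*x)) - p*q^2*Real.exp (q*x) with hG2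
  have hsq : ∀ y : ℝ, HasDerivAt (fun x : ℝ => x^2/4) (y/2) y := by
    intro y
    have := (hasDerivAt_pow 2 y).div_const 4
    exact this.congr_deriv (by norm_num; ring)
  have hexp : ∀ y : ℝ, HasDerivAt (fun x : ℝ => Real.exp (x^2/4)) (y/2 * Real.exp (y^2/4)) y := by
    intro y; have := (hsq y).exp; convert this using 1; ring
  have hpe : ∀ y : ℝ, HasDerivAt (fun x : ℝ => Real.exp (-(p*x))) (-p * Real.exp (-(p*y))) y := by
    intro y
    have h1 : HasDerivAt (fun x : ℝ => -(p*x)) (-p) y := by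
      have := ((hasDerivAt_id y).const_mul p).neg
      exact this.congr_deriv (by ring)
    have := h1.exp; convert this using 1; ring
  have hqe : ∀ y : ℝ, HasDerivAt (fun x : ℝ => Real.exp (q*x)) (q * Real.exp (q*y)) y := by
    intro y
    have h1 : HasDerivAt (fun x : ℝ => q*x) q y := by
      have := (hasDerivAt_id y).const_mul q
      simpa using this
    have := h1.exp; convert this using 1; ring
  have hdG : ∀ y, HasDerivAt G (G1 y) y := by
    intro y
    have := (hexp y).sub ((((hpe y).const_mul q)).add (((hqe y)).const_mul p))
    exact this.congr_deriv (by simp only [hG1]; ring)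
  have hdG1 : ∀ y, HasDerivAt G1 (G2 y) y := by
    intro y
    have h1 : HasDerivAt (fun x : ℝ => x/2 * Real.exp (x^2/4))
        (1/2 * Real.exp (y^2/4) + y/2 * (y/2 * Real.exp (y^2/4))) y :=
      ((hasDerivAt_id y).div_const 2).mul (hexp y)
    have := (h1.add (((hpe y).const_mul (p*q)))).sub ((hqe y).const_mul (p*q))
    exact this.congr_deriv (by simp only [hG2]; ring)
  have hG2nn : ∀ y, 0 ≤ G2 y := by
    intro y
    have e1 : Real.exp (-(p*y)) ≤ Real.exp |y| := by
      apply Real.exp_le_exp.2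
      calc -(p*y) ≤ p * |y| := by nlinarith [neg_abs_le y, abs_nonneg y]
        _ ≤ 1 * |y| := by nlinarith [abs_nonneg y]
        _ = |y| := one_mul _
    have e2 : Real.exp (q*y) ≤ Real.exp |y| := by
      apply Real.exp_le_exp.2
      calc q*y ≤ q * |y| := by nlinarith [le_abs_self y, abs_nonneg y]
        _ ≤ 1 * |y| := by nlinarith [abs_nonneg y]
        _ = |y| := one_mul _
    have key : p^2*q*Real.exp (-(p*y)) + p*q^2*Real.exp (q*y) ≤ (1/4) * Real.exp |y| := by
      have h1 : p^2*q*Real.exp (-(p*y)) ≤ p^2*q*Real.exp |y| := by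
        apply mul_le_mul_of_nonneg_left e1 (by positivity)
      have h2 : p*q^2*Real.exp (q*y) ≤ p*q^2*Real.exp |y| := by
        apply mul_le_mul_of_nonneg_left e2 (by positivity)
      have h3 : p^2*q + p*q^2 ≤ 1/4 := by nlinarith [sq_nonneg (p - q)]
      nlinarith [Real.exp_pos |y|]
    have := my_exp_abs_le y
    simp only [hG2]
    nlinarith [Real.exp_pos (y^2/4), Real.exp_pos |y|]
  have hG1mono : Monotone G1 :=
    monotone_of_deriv_nonneg (fun y => (hdG1 y).differentiableAt)
      (fun y => by rw [(hdG1 y).deriv]; exact hG2nn y)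
  have hG10 : G1 0 = 0 := by simp [hG1]
  have hGcont : Continuous G := by
    have : Differentiable ℝ G := fun y => (hdG y).differentiableAt
    exact this.continuous
  have hG0 : G 0 = 0 := by simp [hG]; linarith
  have hfinal : 0 ≤ G x := by
    rcases le_total 0 x with hx | hx
    · have hmono : MonotoneOn G (Set.Ici 0) := by
        apply monotoneOn_of_deriv_nonneg (convex_Ici 0) hGcont.continuousOn
          (fun y _ => (hdG y).differentiableAt.differentiableWithinAt)
        intro y hy
        rw [(hdG y).deriv]
        rw [interior_Ici] at hy
        have : G1 0 ≤ G1 y := hG1mono (le_of_lt hy)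
        linarith [hG10 ▸ this]
      have := hmono (Set.self_mem_Ici) (Set.mem_Ici.2 hx) hx
      linarith [hG0 ▸ this]
    · have hmono : AntitoneOn G (Set.Iic 0) := by
        apply antitoneOn_of_deriv_nonpos (convex_Iic 0) hGcont.continuousOn
          (fun y _ => (hdG y).differentiableAt.differentiableWithinAt)
        intro y hy
        rw [(hdG y).deriv]
        rw [interior_Iic] at hy
        have : G1 y ≤ G1 0 := hG1mono (le_of_lt hy)
        linarith [hG10 ▸ this]
      have := hmono (Set.mem_Iic.2 hx) (Set.self_mem_Iic) hx
      linarith [hG0 ▸ this]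
  simp only [hG] at hfinal; linarith

lemma two_point {wf wt a b l d : ℝ} (h0f : 0 ≤ wf) (h0t : 0 ≤ wt) (h1 : wf + wt = 1)
    (hd : |b - a| ≤ d) :
    wf * Real.exp (l*(a - (wf*a + wt*b))) + wt * Real.exp (l*(b - (wf*a + wt*b)))
      ≤ Real.exp (l^2*d^2/4) := by
  have hd0 : 0 ≤ d := le_trans (abs_nonneg _) hd
  have e1 : l*(a - (wf*a + wt*b)) = -(wt * (l*(b-a))) := by linear_combination (-l*a)*h1
  have e2 : l*(b - (wf*a + wt*b)) = wf * (l*(b-a)) := by linear_combination (-l*b)*h1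
  rw [e1, e2]
  refine (two_point_core h0t h0f (by linarith) (l*(b-a))).trans ?_
  apply Real.exp_le_exp.2
  have : (b-a)^2 ≤ d^2 := sq_le_sq' (by linarith [abs_le.1 hd]) (by linarith [abs_le.1 hd])
  nlinarith [sq_nonneg l, mul_pow l (b-a) 2]

lemma mgf_bound : ∀ (n : ℕ) (w : Fin n → Bool → ℝ), (∀ i b, 0 ≤ w i b) →
    (∀ i, w i false + w i true = 1) →
    ∀ (f : (Fin n → Bool) → ℝ) (Δ : Fin n → ℝ),
    (∀ i x, |f x - f (Function.update x i (!x i))| ≤ Δ i) → ∀ l : ℝ,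
    ∑ x : Fin n → Bool, (∏ i, w i (x i)) *
        Real.exp (l * (f x - ∑ y : Fin n → Bool, (∏ i, w i (y i)) * f y))
      ≤ Real.exp (l^2 * (∑ i, Δ i^2) / 4) := by
  intro n
  induction n with
  | zero =>
    intro w hw0 hw1 f Δ hf l
    simp
  | succ n IH =>
    intro w hw0 hw1 f Δ hf l
    set w' : Fin n → Bool → ℝ := fun i => w i.succ with hw'
    set f' : (Fin n → Bool) → ℝ :=
      fun y => w 0 false * f (Fin.cons false y) + w 0 true * f (Fin.cons true y) with hf'
    set P : (Fin (n+1) → Bool) → ℝ := fun x => ∏ i, w i (x i) with hP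
    set P' : (Fin n → Bool) → ℝ := fun y => ∏ i, w' i (y i) with hP'
    have hP'nn : ∀ y, 0 ≤ P' y := fun y => Finset.prod_nonneg (fun i _ => hw0 _ _)
    have factA : ∀ b y, P (Fin.cons b y) = w 0 b * P' y := by
      intro b y
      simp only [hP, hP']
      rw [Fin.prod_univ_succ]
      simp [hw']
    have factB : ∀ F : (Fin (n+1) → Bool) → ℝ,
        ∑ x : Fin (n+1) → Bool, F x
          = ∑ y : Fin n → Bool, (F (Fin.cons false y) + F (Fin.cons true y)) := by
      intro F
      rw [← (Fintype.sum_equiv (Fin.consEquiv (fun _ => Bool))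
        (fun p => F (Fin.cons p.1 p.2)) F (fun p => rfl))]
      rw [Fintype.sum_prod_type_right]
      apply Finset.sum_congr rfl
      intro y _
      simp [add_comm]
    set m : ℝ := ∑ x : Fin (n+1) → Bool, P x * f x with hm
    have factC : m = ∑ y : Fin n → Bool, P' y * f' y := by
      rw [hm, factB]
      apply Finset.sum_congr rfl
      intro y _
      rw [factA, factA, hf']
      ring
    have factD : ∀ (i : Fin n) y, |f' y - f' (Function.update y i (!y i))| ≤ Δ i.succ := by
      intro i y
      have e1 : ∀ b : Bool, (Fin.cons b (Function.update y i (!(y i))) : Fin (n+1) → Bool)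
          = Function.update (Fin.cons b y : Fin (n+1) → Bool) i.succ (!(y i)) := by
        intro b
        rw [Fin.cons_update]
      have h1 := hf i.succ (Fin.cons false y)
      have h2 := hf i.succ (Fin.cons true y)
      simp only [Fin.cons_succ] at h1 h2
      rw [← e1 false] at h1
      rw [← e1 true] at h2
      have expand : f' y - f' (Function.update y i (!y i))
          = w 0 false * (f (Fin.cons false y) - f (Fin.cons false (Function.update y i (!y i))))
          + w 0 true * (f (Fin.cons true y) - f (Fin.cons true (Function.update y i (!y i)))) := by
        simp only [hf']; ring
      rw [expand]
      refine (abs_add_le _ _).trans ?_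
      rw [abs_mul, abs_mul, abs_of_nonneg (hw0 0 false), abs_of_nonneg (hw0 0 true)]
      have hwsum := hw1 0
      nlinarith [hw0 0 false, hw0 0 true, abs_nonneg (f (Fin.cons false y) - f (Fin.cons false (Function.update y i (!y i)))), abs_nonneg (f (Fin.cons true y) - f (Fin.cons true (Function.update y i (!y i))))]
    have factE : ∀ y, w 0 false * Real.exp (l*(f (Fin.cons false y) - m))
        + w 0 true * Real.exp (l*(f (Fin.cons true y) - m))
        ≤ Real.exp (l^2 * Δ 0 ^2/4) * Real.exp (l*(f' y - m)) := by
      intro y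
      have hsplit : ∀ b : Bool, l*(f (Fin.cons b y) - m)
          = l*(f (Fin.cons b y) - (w 0 false * f (Fin.cons false y) + w 0 true * f (Fin.cons true y))) + l*(f' y - m) := by
        intro b; simp only [hf']; ring
      rw [hsplit false, hsplit true, Real.exp_add, Real.exp_add]
      have hosc : |f (Fin.cons true y) - f (Fin.cons false y)| ≤ Δ 0 := by
        have := hf 0 (Fin.cons false y)
        simp only [Fin.cons_zero, Bool.not_false, Fin.update_cons_zero] at this
        rw [abs_sub_comm]; exact this
      have h2p := two_point (a := f (Fin.cons false y)) (b := f (Fin.cons true y)) (l := l)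
        (hw0 0 false) (hw0 0 true) (hw1 0) hosc
      have hepos : (0:ℝ) < Real.exp (l*(f' y - m)) := Real.exp_pos _
      calc w 0 false * (Real.exp (l*(f (Fin.cons false y) - (w 0 false * f (Fin.cons false y) + w 0 true * f (Fin.cons true y)))) * Real.exp (l*(f' y - m)))
            + w 0 true * (Real.exp (l*(f (Fin.cons true y) - (w 0 false * f (Fin.cons false y) + w 0 true * f (Fin.cons true y)))) * Real.exp (l*(f' y - m)))
          = (w 0 false * Real.exp (l*(f (Fin.cons false y) - (w 0 false * f (Fin.cons false y) + w 0 true * f (Fin.cons true y))))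
            + w 0 true * Real.exp (l*(f (Fin.cons true y) - (w 0 false * f (Fin.cons false y) + w 0 true * f (Fin.cons true y))))) * Real.exp (l*(f' y - m)) := by ring
        _ ≤ Real.exp (l^2 * Δ 0 ^2/4) * Real.exp (l*(f' y - m)) := by
            apply mul_le_mul_of_nonneg_right _ (le_of_lt hepos)
            exact h2p
    calc ∑ x : Fin (n+1) → Bool, P x * Real.exp (l * (f x - m))
        = ∑ y : Fin n → Bool, (P (Fin.cons false y) * Real.exp (l * (f (Fin.cons false y) - m))
            + P (Fin.cons true y) * Real.exp (l * (f (Fin.cons true y) - m))) :=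
          factB _
      _ = ∑ y : Fin n → Bool, P' y * (w 0 false * Real.exp (l*(f (Fin.cons false y) - m))
            + w 0 true * Real.exp (l*(f (Fin.cons true y) - m))) := by
          apply Finset.sum_congr rfl; intro y _; rw [factA, factA]; ring
      _ ≤ ∑ y : Fin n → Bool, P' y * (Real.exp (l^2 * Δ 0 ^2/4) * Real.exp (l*(f' y - m))) := by
          apply Finset.sum_le_sum
          intro y _
          exact mul_le_mul_of_nonneg_left (factE y) (hP'nn y)
      _ = Real.exp (l^2 * Δ 0 ^2/4) * ∑ y : Fin n → Bool, P' y * Real.exp (l*(f' y - m)) := by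
          rw [Finset.mul_sum]; apply Finset.sum_congr rfl; intro y _; ring
      _ ≤ Real.exp (l^2 * Δ 0 ^2/4) * Real.exp (l^2 * (∑ i : Fin n, Δ i.succ ^2) / 4) := by
          apply mul_le_mul_of_nonneg_left _ (le_of_lt (Real.exp_pos _))
          have := IH w' (fun i b => hw0 _ _) (fun i => hw1 _) f' (fun i => Δ i.succ) factD l
          rw [← factC] at this
          exact this
      _ = Real.exp (l^2 * (∑ i : Fin (n+1), Δ i ^2) / 4) := by
          rw [← Real.exp_add, Fin.sum_univ_succ]
          ring_nf

lemma gauss_shift (v : ℝ) : ∫ g : ℝ, Real.exp (2*v*g - g^2) = Real.sqrt π * Real.exp (v^2) := by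
  have h1 : ∀ g : ℝ, Real.exp (2*v*g - g^2) = Real.exp (v^2) * Real.exp (-(1:ℝ) * (g - v)^2) := by
    intro g; rw [← Real.exp_add]; ring_nf
  simp_rw [h1]
  rw [MeasureTheory.integral_const_mul]
  rw [MeasureTheory.integral_sub_right_eq_self (fun g => Real.exp (-(1:ℝ) * g^2)) v]
  rw [integral_gaussian]
  rw [show π / 1 = π by ring]
  ring

lemma gauss_shift_integrable (v : ℝ) : Integrable (fun g : ℝ => Real.exp (2*v*g - g^2)) := by
  have h1 : ∀ g : ℝ, Real.exp (2*v*g - g^2) = Real.exp (v^2) * Real.exp (-(1:ℝ) * (g - v)^2) := by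
    intro g; rw [← Real.exp_add]; ring_nf
  simp_rw [h1]
  exact ((integrable_exp_neg_mul_sq one_pos).comp_sub_right v).const_mul _

lemma key_int {n : ℕ} (w : Fin n → Bool → ℝ) (hw0 : ∀ i b, 0 ≤ w i b)
    (hw1 : ∀ i, w i false + w i true = 1)
    (f : (Fin n → Bool) → ℝ) (Δ : Fin n → ℝ)
    (hf : ∀ i x, |f x - f (Function.update x i (!x i))| ≤ Δ i)
    (t : ℝ) (ht : 0 < t) (ht2 : (4/3) * (∑ i, Δ i^2) ≤ t^2) :
    ∑ x : Fin n → Bool, (∏ i, w i (x i)) *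
        Real.exp (((f x - ∑ y : Fin n → Bool, (∏ i, w i (y i)) * f y)/t)^2) ≤ 2 := by
  set σ2 : ℝ := ∑ i, Δ i^2 with hσ2
  have hσ2nn : 0 ≤ σ2 := Finset.sum_nonneg (fun i _ => sq_nonneg _)
  set m : ℝ := ∑ y : Fin n → Bool, (∏ i, w i (y i)) * f y with hm
  set P : (Fin n → Bool) → ℝ := fun x => ∏ i, w i (x i) with hP
  have hPnn : ∀ x, 0 ≤ P x := fun x => Finset.prod_nonneg (fun i _ => hw0 _ _)
  set c : ℝ := 1 - σ2 / t^2 with hc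
  have hc4 : 1/4 ≤ c := by
    rw [hc]
    have h1 : σ2 / t^2 ≤ 3/4 := by
      rw [div_le_iff₀ (by positivity)]
      linarith
    linarith
  have hcpos : 0 < c := lt_of_lt_of_le (by norm_num) hc4
  clear_value c
  -- step 2
  have hint : ∀ x : Fin n → Bool, Integrable
      (fun g : ℝ => P x * Real.exp (2*((f x - m)/t)*g - g^2)) :=
    fun x => (gauss_shift_integrable _).const_mul _
  have step2 : Real.sqrt π * (∑ x : Fin n → Bool, P x * Real.exp (((f x - m)/t)^2))
      = ∫ g : ℝ, ∑ x : Fin n → Bool, P x * Real.exp (2*((f x - m)/t)*g - g^2) := by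
    rw [MeasureTheory.integral_finset_sum _ (fun x _ => hint x)]
    rw [Finset.mul_sum]
    apply Finset.sum_congr rfl
    intro x _
    rw [MeasureTheory.integral_const_mul, gauss_shift]
    ring
  -- step 3 pointwise
  have step3 : ∀ g : ℝ, ∑ x : Fin n → Bool, P x * Real.exp (2*((f x - m)/t)*g - g^2)
      ≤ Real.exp (-c * g^2) := by
    intro g
    have hmgf := mgf_bound n w hw0 hw1 f Δ hf (2*g/t)
    rw [← hσ2] at hmgf
    have e1 : ∀ x : Fin n → Bool, Real.exp (2*((f x - m)/t)*g - g^2)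
        = Real.exp ((2*g/t) * (f x - m)) * Real.exp (-g^2) := by
      intro x
      rw [← Real.exp_add]
      congr 1
      field_simp
      ring
    calc ∑ x : Fin n → Bool, P x * Real.exp (2*((f x - m)/t)*g - g^2)
        = (∑ x : Fin n → Bool, P x * Real.exp ((2*g/t) * (f x - m))) * Real.exp (-g^2) := by
          rw [Finset.sum_mul]
          exact Finset.sum_congr rfl (fun x _ => by rw [e1 x]; ring)
      _ ≤ Real.exp ((2*g/t)^2 * σ2 / 4) * Real.exp (-g^2) :=
          mul_le_mul_of_nonneg_right hmgf (le_of_lt (Real.exp_pos _))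
      _ ≤ Real.exp (-c * g^2) := by
          rw [← Real.exp_add]
          apply Real.exp_le_exp.2
          have : (2*g/t)^2 * σ2 / 4 = g^2 * (σ2 / t^2) := by
            field_simp; ring
          rw [this, hc]
          nlinarith [sq_nonneg g]
  -- combine
  have hsumint : Integrable (fun g : ℝ => ∑ x : Fin n → Bool, P x * Real.exp (2*((f x - m)/t)*g - g^2)) :=
    MeasureTheory.integrable_finset_sum _ (fun x _ => hint x)
  have step4 : (∫ g : ℝ, ∑ x : Fin n → Bool, P x * Real.exp (2*((f x - m)/t)*g - g^2))
      ≤ ∫ g : ℝ, Real.exp (-c * g^2) :=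
    MeasureTheory.integral_mono hsumint (integrable_exp_neg_mul_sq hcpos) step3
  have step5 : (∫ g : ℝ, Real.exp (-c * g^2)) ≤ 2 * Real.sqrt π := by
    rw [integral_gaussian]
    rw [show 2 * Real.sqrt π = Real.sqrt (4 * π) by
      rw [show (4:ℝ) * π = 2^2 * π by ring, Real.sqrt_mul (by positivity), Real.sqrt_sq (by norm_num)]]
    apply Real.sqrt_le_sqrt
    rw [div_le_iff₀ hcpos]
    have h5 := mul_le_mul_of_nonneg_left hc4 (le_of_lt Real.pi_pos)
    nlinarith [Real.pi_pos, h5]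
  have hπ : 0 < Real.sqrt π := Real.sqrt_pos.2 Real.pi_pos
  have : Real.sqrt π * (∑ x : Fin n → Bool, P x * Real.exp (((f x - m)/t)^2)) ≤ Real.sqrt π * 2 := by
    rw [step2]
    calc _ ≤ ∫ g : ℝ, Real.exp (-c * g^2) := step4
      _ ≤ 2 * Real.sqrt π := step5
      _ = Real.sqrt π * 2 := by ring
  exact le_of_mul_le_mul_left this hπ

/-- Sub-Gaussian Orlicz norm bound from the method of bounded differences:
`‖f(W) − E f(W)‖_Ψ ≤ √(3/2) ‖Δf‖₂` with `Ψ(x) = e^{x²} − 1`. -/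
theorem stmt_10 {Ω : Type*} [MeasureSpace Ω] [IsProbabilityMeasure (ℙ : Measure Ω)]
    {n : ℕ} (W : Fin n → Ω → Bool) (hmeas : ∀ i, Measurable (W i))
    (hindep : iIndepFun W ℙ)
    (f : (Fin n → Bool) → ℝ)
    (Δ : Fin n → ℝ)
    (hΔ : ∀ i, Δ i = ⨆ x : Fin n → Bool, |f x - f (Function.update x i (!x i))|) :
    sInf {t : ℝ | 0 < t ∧
        Integrable (fun ω =>
          Real.exp (((f (fun i => W i ω) - ∫ ω', f (fun i => W i ω') ∂ℙ) / t) ^ 2) - 1) ℙ ∧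
        ∫ ω, (Real.exp (((f (fun i => W i ω) - ∫ ω', f (fun i => W i ω') ∂ℙ) / t) ^ 2) - 1) ∂ℙ
          ≤ 1}
      ≤ Real.sqrt (3 / 2) * Real.sqrt (∑ i, Δ i ^ 2) := by
  classical
  set T : Ω → (Fin n → Bool) := fun ω i => W i ω with hT
  have hpre : ∀ x : Fin n → Bool, T ⁻¹' {x} = ⋂ i, W i ⁻¹' {x i} := by
    intro x
    ext ω
    simp only [Set.mem_preimage, Set.mem_singleton_iff, Set.mem_iInter, funext_iff, hT]
  have hsetmeas : ∀ x : Fin n → Bool, MeasurableSet (T ⁻¹' {x}) := by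
    intro x
    rw [hpre]
    exact MeasurableSet.iInter (fun i => hmeas i (measurableSet_singleton (x i)))
  set P : (Fin n → Bool) → ℝ := fun x => (ℙ (T ⁻¹' {x})).toReal with hP
  -- transfer lemma
  have transfer : ∀ g : (Fin n → Bool) → ℝ,
      Integrable (fun ω => g (T ω)) ℙ ∧ ∫ ω, g (T ω) ∂ℙ = ∑ x, P x * g x := by
    intro g
    have hrepr : (fun ω => g (T ω))
        = fun ω => ∑ x : Fin n → Bool, Set.indicator (T ⁻¹' {x}) (fun _ => g x) ω := by
      funext ω
      rw [Finset.sum_congr rfl (fun x _ => Set.indicator_apply _ _ _)]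
      simp only [Set.mem_preimage, Set.mem_singleton_iff]
      rw [Finset.sum_ite_eq (Finset.univ) (T ω) (fun x => g x)]
      simp
    constructor
    · rw [hrepr]
      exact integrable_finset_sum _
        (fun x _ => (integrable_const (g x)).indicator (hsetmeas x))
    · rw [hrepr, integral_finset_sum _
        (fun x _ => (integrable_const (g x)).indicator (hsetmeas x))]
      apply Finset.sum_congr rfl
      intro x _
      rw [integral_indicator_const _ (hsetmeas x)]
      simp [hP, mul_comm, Measure.real]
  -- weights
  set w : Fin n → Bool → ℝ := fun i b => (ℙ (W i ⁻¹' {b})).toReal with hw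
  have hw0 : ∀ i b, 0 ≤ w i b := fun i b => ENNReal.toReal_nonneg
  have hw1 : ∀ i, w i false + w i true = 1 := by
    intro i
    have hdisj : Disjoint (W i ⁻¹' {false}) (W i ⁻¹' {true}) := by
      apply Set.disjoint_left.2
      intro ω h1 h2
      simp only [Set.mem_preimage, Set.mem_singleton_iff] at h1 h2
      rw [h1] at h2; exact Bool.noConfusion h2
    have hunion : W i ⁻¹' {false} ∪ W i ⁻¹' {true} = Set.univ := by
      ext ω; simp only [Set.mem_union, Set.mem_preimage, Set.mem_singleton_iff]
      cases h : W i ω <;> simp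
    have := measure_union (μ := (ℙ : MeasureTheory.Measure Ω)) hdisj (hmeas i (measurableSet_singleton true))
    rw [hunion, measure_univ] at this
    rw [hw]
    rw [← ENNReal.toReal_add (measure_ne_top _ _) (measure_ne_top _ _), ← this]
    simp
  have hPw : ∀ x, P x = ∏ i, w i (x i) := by
    intro x
    rw [hP]
    simp only
    rw [hpre]
    have := hindep.measure_inter_preimage_eq_mul Finset.univ
      (sets := fun i => ({x i} : Set Bool)) (fun i _ => measurableSet_singleton (x i))
    rw [show (⋂ i, W i ⁻¹' {x i}) = ⋂ i ∈ Finset.univ, W i ⁻¹' {x i} by simp]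
    rw [this, ENNReal.toReal_prod]
  -- oscillation bound
  have hfo : ∀ i x, |f x - f (Function.update x i (!x i))| ≤ Δ i := by
    intro i x
    rw [hΔ i]
    exact le_ciSup (f := fun x : Fin n → Bool => |f x - f (Function.update x i (!x i))|)
      (Set.Finite.bddAbove (Set.finite_range _)) x
  have hΔnn : ∀ i, 0 ≤ Δ i := fun i => le_trans (abs_nonneg _) (hfo i (fun _ => false))
  set σ2 : ℝ := ∑ i, Δ i ^ 2 with hσ2
  have hσ2nn : 0 ≤ σ2 := Finset.sum_nonneg (fun i _ => sq_nonneg _)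
  set m : ℝ := ∫ ω', f (fun i => W i ω') ∂ℙ with hm
  have hmval : m = ∑ x, P x * f x := (transfer f).2
  set S : Set ℝ := {t : ℝ | 0 < t ∧
      Integrable (fun ω =>
        Real.exp (((f (fun i => W i ω) - m) / t) ^ 2) - 1) ℙ ∧
      ∫ ω, (Real.exp (((f (fun i => W i ω) - m) / t) ^ 2) - 1) ∂ℙ
        ≤ 1} with hS
  -- membership lemma
  have hmem : ∀ t : ℝ, 0 < t → (4/3) * σ2 ≤ t^2 → t ∈ S := by
    intro t ht ht2
    set g : (Fin n → Bool) → ℝ := fun x => Real.exp (((f x - m) / t)^2) - 1 with hg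
    refine ⟨ht, ?_, ?_⟩
    · exact (transfer g).1
    · have hval : (∫ ω, (Real.exp (((f (fun i => W i ω) - m) / t) ^ 2) - 1) ∂ℙ)
          = ∑ x, P x * g x := (transfer g).2
      rw [hval]
      have hsum1 : ∑ x, P x = 1 := by
        have h2 := (transfer (fun _ => 1)).2
        simp only [integral_const, measure_univ, ENNReal.toReal_one, probReal_univ, one_smul, mul_one] at h2
        exact h2.symm
      have hkey := key_int w hw0 hw1 f Δ hfo t ht (by rw [← hσ2]; exact ht2)
      have hMm : (∑ y : Fin n → Bool, (∏ i, w i (y i)) * f y) = m := by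
        rw [hmval]
        apply Finset.sum_congr rfl; intro x _; rw [hPw]
      rw [hMm] at hkey
      have expand : ∑ x, P x * g x = (∑ x, P x * Real.exp (((f x - m) / t)^2)) - ∑ x, P x := by
        rw [← Finset.sum_sub_distrib]
        apply Finset.sum_congr rfl; intro x _; rw [hg]; ring
      rw [expand, hsum1]
      have : (∑ x, P x * Real.exp (((f x - m) / t)^2))
          = ∑ x : Fin n → Bool, (∏ i, w i (x i)) * Real.exp (((f x - m)/t)^2) := by
        apply Finset.sum_congr rfl; intro x _; rw [hPw]
      rw [this]
      linarith [hkey]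
  -- conclude
  have hbdd : BddBelow S := ⟨0, fun t ht => le_of_lt ht.1⟩
  set t0 : ℝ := Real.sqrt (3/2) * Real.sqrt σ2 with ht0
  have ht0nn : 0 ≤ t0 := mul_nonneg (Real.sqrt_nonneg _) (Real.sqrt_nonneg _)
  have ht0sq : t0^2 = (3/2) * σ2 := by
    rw [ht0, mul_pow, Real.sq_sqrt (by norm_num), Real.sq_sqrt hσ2nn]
  rcases eq_or_lt_of_le ht0nn with h0 | h0
  · -- t0 = 0, so σ2 = 0
    have hσ0 : σ2 = 0 := by
      have h1 : Real.sqrt σ2 = 0 := by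
        rcases mul_eq_zero.1 h0.symm with h | h
        · exact absurd h (by positivity)
        · exact h
      have := Real.sqrt_eq_zero hσ2nn |>.1 h1
      exact this
    rw [← h0]
    by_contra hcon
    push_neg at hcon
    have hε : (0:ℝ) < sInf S := hcon
    have : sInf S ≤ sInf S / 2 := csInf_le hbdd (hmem (sInf S / 2) (by linarith) (by
      rw [hσ0]
      have : 0 < (sInf S / 2)^2 := by positivity
      linarith))
    linarith
  · exact csInf_le hbdd (hmem t0 h0 (by rw [ht0sq]; linarith))
end
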